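/- For every k ≥ 1, the words x = t^k and y = t^k t̄^k t^k in the alphabet {t, t̄} (with t > 1 fixed) satisfy w(x) = w(y) and α(x) = α(y), and hence u_x and u_y act identically on all partitions; in particular both have α_{t-1} = k and α_t = 0 and w_t = k. -/
import Mathlib


/-- Alphabet Γ = ℕ ∪ ℕ̄ : a letter is `(false, i)` for unbarred `i` (up-operator)
and `(true, i)` for barred `ī` (down-operator); indices of interest are `i ≥ 1`. -/
abbrev Γ : Type := Bool × ℕ

/-- `c : ℕ → ℕ` records the column lengths `λ'_i` (for `i ≥ 1`) of a partition:
nonincreasing, eventually zero; `c 0 = 0` is a normalization. -/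
def IsPartition (c : ℕ → ℕ) : Prop :=
  (∀ i, 1 ≤ i → c (i + 1) ≤ c i) ∧ c 0 = 0 ∧ ∃ N, ∀ i, N ≤ i → c i = 0

open scoped Classical in
/-- The up-operator `u_i`: add a box to column `i` if the result is a partition, else `0` (`none`). -/
noncomputable def upFun (i : ℕ) (c : ℕ → ℕ) : Option (ℕ → ℕ) :=
  if 1 ≤ i ∧ IsPartition (Function.update c i (c i + 1)) then
    some (Function.update c i (c i + 1)) else none

open scoped Classical in
/-- The down-operator `d_i`: remove a box from column `i` if the result is a partition, else `0`. -/
noncomputable def downFun (i : ℕ) (c : ℕ → ℕ) : Option (ℕ → ℕ) :=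
  if 1 ≤ i ∧ 1 ≤ c i ∧ IsPartition (Function.update c i (c i - 1)) then
    some (Function.update c i (c i - 1)) else none

/-- `u_i` extended to `0` (operators applied to `0` give `0`). -/
noncomputable def U (i : ℕ) (o : Option (ℕ → ℕ)) : Option (ℕ → ℕ) := o.bind (upFun i)

/-- `d_i` extended to `0`. -/
noncomputable def D (i : ℕ) (o : Option (ℕ → ℕ)) : Option (ℕ → ℕ) := o.bind (downFun i)

/-- The action `u_x` of a word `x` on (possibly zero) partitions, rightmost letter acting first. -/
noncomputable def act (x : List Γ) (o : Option (ℕ → ℕ)) : Option (ℕ → ℕ) :=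
  x.foldr (fun l o => if l.1 then D l.2 o else U l.2 o) o

/-- The weight `w_j(x)`: occurrences of `j` minus occurrences of `j̄` in `x`. -/
def wt (j : ℕ) (x : List Γ) : ℤ :=
  (x.count ((false, j) : Γ) : ℤ) - (x.count ((true, j) : Γ) : ℤ)

/-- `α_i(x)`: the maximum of `w_{i+1}(x̃) - w_i(x̃)` over all suffix subwords `x̃` of `x`
(including the empty suffix, which contributes `0`). -/
def alphaV (i : ℕ) (x : List Γ) : ℤ :=
  (x.tails.map (fun s => wt (i + 1) s - wt i s)).foldr max 0


lemma wt_append (j : ℕ) (x y : List Γ) : wt j (x ++ y) = wt j x + wt j y := by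
  simp [wt, List.count_append]; ring

lemma wt_rep_u (j t m : ℕ) :
    wt j (List.replicate m ((false, t) : Γ)) = if j = t then (m : ℤ) else 0 := by
  simp [wt, List.count_replicate]
  split_ifs with h1 h2 h3 <;> simp_all <;> omega

lemma wt_rep_d (j t m : ℕ) :
    wt j (List.replicate m ((true, t) : Γ)) = if j = t then -(m : ℤ) else 0 := by
  simp [wt, List.count_replicate]
  split_ifs with h1 h2 h3 <;> simp_all <;> omega

lemma alphaV_nil (i : ℕ) : alphaV i [] = 0 := by
  simp [alphaV, wt]

lemma alphaV_cons (i : ℕ) (a : Γ) (s : List Γ) :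
    alphaV i (a :: s) = max (wt (i + 1) (a :: s) - wt i (a :: s)) (alphaV i s) := by
  simp [alphaV, List.tails_cons]

lemma alphaV_rep (i t k : ℕ) :
    alphaV i (List.replicate k ((false, t) : Γ)) = if i + 1 = t then (k : ℤ) else 0 := by
  induction k with
  | zero => simp [alphaV_nil]
  | succ k ih =>
    rw [List.replicate_succ, alphaV_cons, ih, ← List.replicate_succ, wt_rep_u, wt_rep_u]
    split_ifs <;> omega

lemma alphaV_seg2 (i t k : ℕ) : ∀ b, b ≤ k →
    alphaV i (List.replicate b ((true, t) : Γ) ++ List.replicate k ((false, t) : Γ)) =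
      if i + 1 = t then (k : ℤ) else 0 := by
  intro b
  induction b with
  | zero => intro _; simpa using alphaV_rep i t k
  | succ b ih =>
    intro hb
    rw [List.replicate_succ, List.cons_append, alphaV_cons, ih (by omega),
      ← List.cons_append, ← List.replicate_succ, wt_append, wt_append, wt_rep_u, wt_rep_u,
      wt_rep_d, wt_rep_d]
    split_ifs <;> omega

lemma alphaV_seg3 (i t k : ℕ) : ∀ a, a ≤ k →
    alphaV i (List.replicate a ((false, t) : Γ) ++ (List.replicate k ((true, t) : Γ) ++
        List.replicate k ((false, t) : Γ))) =
      if i + 1 = t then (k : ℤ) else 0 := by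
  intro a
  induction a with
  | zero => intro _; simpa using alphaV_seg2 i t k k le_rfl
  | succ a ih =>
    intro ha
    rw [List.replicate_succ, List.cons_append, alphaV_cons, ih (by omega),
      ← List.cons_append, ← List.replicate_succ, wt_append, wt_append, wt_append, wt_append,
      wt_rep_u, wt_rep_u, wt_rep_d, wt_rep_d, wt_rep_u, wt_rep_u]
    split_ifs <;> omega

lemma part_update {c : ℕ → ℕ} {t : ℕ} (hc : IsPartition c) (ht : 1 < t) (m : ℕ)
    (h1 : c t + m ≤ c (t - 1)) : IsPartition (Function.update c t (c t + m)) := by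
  obtain ⟨hmono, h0, N, hN⟩ := hc
  refine ⟨?_, ?_, ⟨max N (t + 1), ?_⟩⟩
  · intro i hi
    rcases eq_or_ne (i + 1) t with h | h
    · have : i = t - 1 := by omega
      rw [Function.update_apply, Function.update_apply, h, if_pos rfl, if_neg (by omega), this]
      exact h1
    · rcases eq_or_ne i t with h2 | h2
      · rw [Function.update_apply, Function.update_apply, if_neg h, if_pos h2, h2]
        have := hmono t (by omega)
        omega
      · rw [Function.update_apply, Function.update_apply, if_neg h, if_neg h2]
        exact hmono i hi
  · rw [Function.update_apply, if_neg (by omega)]; exact h0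
  · intro i hi
    rw [Function.update_apply, if_neg (by omega)]
    exact hN i (by omega)

lemma not_part_update {c : ℕ → ℕ} {t : ℕ} (hc : IsPartition c) (ht : 1 < t)
    (h1 : c (t - 1) < c t + 1) : ¬ IsPartition (Function.update c t (c t + 1)) := by
  rintro ⟨hmono, -, -⟩
  have := hmono (t - 1) (by omega)
  rw [show t - 1 + 1 = t by omega, Function.update_apply, Function.update_apply,
    if_pos rfl, if_neg (by omega)] at this
  omega

lemma act_append (x y : List Γ) (o : Option (ℕ → ℕ)) : act (x ++ y) o = act x (act y o) := by
  simp [act, List.foldr_append]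

lemma act_none (x : List Γ) : act x none = none := by
  induction x with
  | nil => rfl
  | cons a s ih =>
    show (if a.1 then D a.2 (act s none) else U a.2 (act s none)) = none
    rw [ih]; cases a.1 <;> simp [U, D]

lemma act_single_u (t : ℕ) (c : ℕ → ℕ) : act [((false, t) : Γ)] (some c) = upFun t c := by
  simp [act, U]

lemma act_single_d (t : ℕ) (c : ℕ → ℕ) : act [((true, t) : Γ)] (some c) = downFun t c := by
  simp [act, D]

lemma up_act {t : ℕ} (ht : 1 < t) :
    ∀ (k : ℕ) (c : ℕ → ℕ), IsPartition c → c t + k ≤ c (t - 1) →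
      act (List.replicate k ((false, t) : Γ)) (some c) = some (Function.update c t (c t + k)) := by
  intro k
  induction k with
  | zero => intro c _ _; simp [act]
  | succ k ih =>
    intro c hc h
    rw [List.replicate_succ', act_append, act_single_u]
    have hcond : 1 ≤ t ∧ IsPartition (Function.update c t (c t + 1)) :=
      ⟨by omega, part_update hc ht 1 (by omega)⟩
    rw [upFun, if_pos hcond]
    have h1 : Function.update c t (c t + 1) t = c t + 1 := Function.update_self ..
    have h2 : Function.update c t (c t + 1) (t - 1) = c (t - 1) :=
      Function.update_of_ne (by omega) _ _
    rw [ih _ hcond.2 (by rw [h1, h2]; omega), h1, Function.update_idem,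
      show c t + 1 + k = c t + (k + 1) from by omega]

lemma up_act_none {t : ℕ} (ht : 1 < t) :
    ∀ (k : ℕ) (c : ℕ → ℕ), IsPartition c → c (t - 1) < c t + k →
      act (List.replicate k ((false, t) : Γ)) (some c) = none := by
  intro k
  induction k with
  | zero =>
    intro c hc h
    have := hc.1 (t - 1) (by omega)
    rw [show t - 1 + 1 = t by omega] at this
    omega
  | succ k ih =>
    intro c hc h
    rw [List.replicate_succ', act_append, act_single_u]
    by_cases hcase : c t + 1 ≤ c (t - 1)
    · have hcond : 1 ≤ t ∧ IsPartition (Function.update c t (c t + 1)) :=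
        ⟨by omega, part_update hc ht 1 hcase⟩
      rw [upFun, if_pos hcond]
      have h1 : Function.update c t (c t + 1) t = c t + 1 := Function.update_self ..
      have h2 : Function.update c t (c t + 1) (t - 1) = c (t - 1) :=
        Function.update_of_ne (by omega) _ _
      exact ih _ hcond.2 (by rw [h1, h2]; omega)
    · rw [upFun, if_neg (fun hh => (not_part_update hc ht (by omega)) hh.2), act_none]

lemma down_act {t : ℕ} (ht : 1 < t) :
    ∀ (k : ℕ) (c : ℕ → ℕ), IsPartition c → c t + k ≤ c (t - 1) →
      act (List.replicate k ((true, t) : Γ)) (some (Function.update c t (c t + k))) = some c := by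
  intro k
  induction k with
  | zero => intro c _ _; simp [act, Function.update_eq_self]
  | succ k ih =>
    intro c hc h
    rw [List.replicate_succ', act_append, act_single_d]
    have h1 : Function.update c t (c t + (k + 1)) t = c t + (k + 1) := Function.update_self ..
    have hcond : 1 ≤ t ∧ 1 ≤ Function.update c t (c t + (k + 1)) t ∧
        IsPartition (Function.update (Function.update c t (c t + (k + 1))) t
          (Function.update c t (c t + (k + 1)) t - 1)) := by
      refine ⟨by omega, by rw [h1]; omega, ?_⟩
      rw [h1, Function.update_idem, show c t + (k + 1) - 1 = c t + k by omega]
      exact part_update hc ht k (by omega)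
    rw [downFun, if_pos hcond, h1, Function.update_idem,
      show c t + (k + 1) - 1 = c t + k by omega]
    exact ih c hc (by omega)

theorem unbounded_example (t : ℕ) (ht : 1 < t) (k : ℕ) (hk : 1 ≤ k) :
    (∀ j, 1 ≤ j →
      wt j (List.replicate k ((false, t) : Γ)) =
        wt j (List.replicate k ((false, t) : Γ) ++ List.replicate k ((true, t) : Γ) ++
              List.replicate k ((false, t) : Γ)) ∧
      alphaV j (List.replicate k ((false, t) : Γ)) =
        alphaV j (List.replicate k ((false, t) : Γ) ++ List.replicate k ((true, t) : Γ) ++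
              List.replicate k ((false, t) : Γ))) ∧
    (∀ c : ℕ → ℕ, IsPartition c →
      act (List.replicate k ((false, t) : Γ)) (some c) =
      act (List.replicate k ((false, t) : Γ) ++ List.replicate k ((true, t) : Γ) ++
           List.replicate k ((false, t) : Γ)) (some c)) ∧
    alphaV (t - 1) (List.replicate k ((false, t) : Γ)) = k ∧
    alphaV t (List.replicate k ((false, t) : Γ)) = 0 ∧
    wt t (List.replicate k ((false, t) : Γ)) = k := by
  refine ⟨?_, ?_, ?_, ?_, ?_⟩
  · intro j hj
    constructor
    · rw [wt_append, wt_append, wt_rep_u, wt_rep_d]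
      split_ifs <;> omega
    · rw [List.append_assoc, alphaV_seg3 j t k k le_rfl, alphaV_rep]
  · intro c hc
    rw [act_append, act_append]
    by_cases h : c t + k ≤ c (t - 1)
    · rw [up_act ht k c hc h, down_act ht k c hc h, up_act ht k c hc h]
    · rw [up_act_none ht k c hc (by omega), act_none, act_none]
  · rw [alphaV_rep, if_pos (by omega)]
  · rw [alphaV_rep, if_neg (by omega)]
  · rw [wt_rep_u, if_pos rfl]
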